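/- Let (K, D(K)) be maximal accretive on a complex Hilbert space H and let Λ ≥ 1 be self-adjoint with D(Λ) dense in D(K) and ‖Ku‖ ≤ ‖Λu‖ for u ∈ D(Λ). Let r ∈ (0,1] and assume C₀ := sup_{t>0} t^{2/r − 1} ‖Λ^r e^{−t(1+K)}‖ < ∞ (meaning e^{−t(1+K)} maps H into D(Λ^r) with this uniform bound). Then for every θ ∈ (0, r/(2−r)) there is C_θ > 0 such that ‖Λ^{θr} u‖ ≤ C_θ ( ‖(K − iλ)u‖ + ‖u‖ ) for all u ∈ D(K) and all λ ∈ ℝ. -/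

import Mathlib

open MeasureTheory

section AuxCuspidal

variable {H : Type*} [NormedAddCommGroup H] [InnerProductSpace ℂ H] [CompleteSpace H]

private lemma aux_scalar_young {p l x : ℝ} (hp : 0 < p) (hp1 : p < 1) (hl : 0 < l)
    (hx : 0 ≤ x) : x ^ p ≤ p * l ^ (p - 1) * x + (1 - p) * l ^ p := by
  have h := Real.geom_mean_le_arith_mean2_weighted (w₁ := p) (w₂ := 1 - p) (p₁ := x)
    (p₂ := l) hp.le (by linarith) hx hl.le (by ring)
  have hll : l ^ (p - 1) * l ^ (1 - p) = 1 := by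
    rw [← Real.rpow_add hl]; norm_num
  have hlp : l ^ (p - 1) * l = l ^ p := by
    nth_rewrite 2 [show p = (p - 1) + 1 by ring]
    rw [Real.rpow_add hl, Real.rpow_one]
  calc x ^ p = l ^ (p - 1) * (x ^ p * l ^ (1 - p)) := by
        rw [show l ^ (p-1) * (x ^ p * l ^ (1-p)) = (l ^ (p-1) * l ^ (1-p)) * x ^ p by ring,
          hll, one_mul]
    _ ≤ l ^ (p - 1) * (p * x + (1 - p) * l) :=
        mul_le_mul_of_nonneg_left h (Real.rpow_nonneg hl.le _)
    _ = p * l ^ (p - 1) * x + (1 - p) * (l ^ (p - 1) * l) := by ring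
    _ = _ := by rw [hlp]

private lemma aux_scalar_opt {p N X M : ℝ} (hp : 0 < p) (hp1 : p < 1) (hX : 0 ≤ X)
    (hM : 0 < M) (h : ∀ l : ℝ, 0 < l → N ≤ p * l ^ (p - 1) * X + (1 - p) * l ^ p * M) :
    N ≤ X ^ p * M ^ (1 - p) := by
  rcases eq_or_lt_of_le hX with hX0 | hX0
  · have hN0 : N ≤ 0 := by
      have h1p : (0:ℝ) < 1 - p := by linarith
      refine le_of_forall_pos_le_add fun ε hε => ?_
      have hd : 0 < ε / ((1 - p) * M) := by positivity
      set l := (ε / ((1 - p) * M)) ^ (1 / p) with hldef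
      have hl0 : 0 < l := Real.rpow_pos_of_pos hd _
      have hlp : l ^ p = ε / ((1 - p) * M) := by
        rw [hldef, ← Real.rpow_mul hd.le, one_div_mul_cancel hp.ne', Real.rpow_one]
      calc N ≤ p * l ^ (p - 1) * X + (1 - p) * l ^ p * M := h l hl0
        _ = (1 - p) * (ε / ((1 - p) * M)) * M := by rw [hlp, ← hX0]; ring
        _ = ε := by field_simp
        _ ≤ 0 + ε := by linarith
    rw [← hX0, Real.zero_rpow hp.ne', zero_mul]
    exact hN0
  · have hXM : 0 < X / M := div_pos hX0 hM
    have e1 : (X / M) ^ (p - 1) = X ^ (p - 1) * (M ^ (1 - p)) := by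
      rw [Real.div_rpow hX hM.le, div_eq_mul_inv, ← Real.rpow_neg hM.le, neg_sub]
    have e2 : (X / M) ^ p = X ^ p * M ^ (-p) := by
      rw [Real.div_rpow hX hM.le, div_eq_mul_inv, ← Real.rpow_neg hM.le]
    have e3 : X ^ (p - 1) * X = X ^ p := by
      nth_rewrite 2 [show p = (p - 1) + 1 by ring]
      rw [Real.rpow_add hX0, Real.rpow_one]
    have e4 : M ^ (-p) * M = M ^ (1 - p) := by
      nth_rewrite 1 [show M ^ (1-p) = M ^ (-p + 1) by rw [neg_add_eq_sub]]
      rw [Real.rpow_add hM, Real.rpow_one]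
    have t1 : p * (X / M) ^ (p - 1) * X = p * (X ^ p * M ^ (1 - p)) := by
      rw [e1, ← e3]; ring
    have t2 : (1 - p) * (X / M) ^ p * M = (1 - p) * (X ^ p * M ^ (1 - p)) := by
      rw [e2, ← e4]; ring
    calc N ≤ p * (X / M) ^ (p - 1) * X + (1 - p) * (X / M) ^ p * M := h _ hXM
      _ = X ^ p * M ^ (1 - p) := by rw [t1, t2]; ring

private lemma aux_re_inner_real_smul (c : ℝ) (y z : H) :
    (inner ℂ y (c • z) : ℂ).re = c * (inner ℂ y z : ℂ).re := by
  have h1 : c • z = (c : ℂ) • z := by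
    rw [← algebraMap_smul ℂ c z]; norm_num
  rw [h1, inner_smul_right]
  simp [Complex.mul_re]

private lemma aux_re_inner_mono {O₁ O₂ : H →L[ℂ] H} (h : O₁ ≤ O₂) (y : H) :
    (inner ℂ y (O₁ y) : ℂ).re ≤ (inner ℂ y (O₂ y) : ℂ).re := by
  have hp : (O₂ - O₁).IsPositive := (ContinuousLinearMap.le_def O₁ O₂).mp h
  have h2 := hp.inner_nonneg_right y
  rw [ContinuousLinearMap.sub_apply, inner_sub_right] at h2
  have : (0:ℝ) ≤ ((inner ℂ y (O₂ y) : ℂ) - (inner ℂ y (O₁ y) : ℂ)).re := (Complex.le_def.mp h2).1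
  rw [Complex.sub_re] at this
  linarith

/-- The interpolation inequality `‖S^(p*c) y‖ ≤ ‖S^c y‖^p * ‖y‖^(1-p)` for a positive
contraction `S` (here `S^a = cfc (· ^ a) S`). -/
private lemma aux_interp (S : H →L[ℂ] H) (hS_pos : S.IsPositive) {c p : ℝ}
    (hc : 0 < c) (hp : 0 < p) (hp1 : p < 1) (y : H) :
    ‖cfc (fun x : ℝ => x ^ (p * c)) S y‖ ≤
      ‖cfc (fun x : ℝ => x ^ c) S y‖ ^ p * ‖y‖ ^ (1 - p) := by
  have h0 : (0 : H →L[ℂ] H) ≤ S := (ContinuousLinearMap.nonneg_iff_isPositive S).mpr hS_pos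
  have hspec : ∀ x ∈ spectrum ℝ S, 0 ≤ x := fun x hx => spectrum_nonneg_of_nonneg h0 hx
  have hcont : ∀ a : ℝ, 0 ≤ a → ContinuousOn (fun x : ℝ => x ^ a) (spectrum ℝ S) :=
    fun a ha x _ => (Real.continuousAt_rpow_const x a (Or.inr ha)).continuousWithinAt
  by_cases hy : y = 0
  · simp [hy, Real.zero_rpow (show (1:ℝ) - p ≠ 0 by linarith)]
  have hM : 0 < ‖y‖ ^ 2 := pow_pos (norm_pos_iff.mpr hy) 2
  -- squared norms as re-inner pairings
  have hCsq : ∀ a : ℝ, 0 < a → ∀ z : H, ‖cfc (fun x : ℝ => x ^ a) S z‖ ^ 2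
      = (inner ℂ z (cfc (fun x : ℝ => x ^ (a + a)) S z) : ℂ).re := by
    intro a ha z
    set C := cfc (fun x : ℝ => x ^ a) S with hC
    have hsa : IsSelfAdjoint C := cfc_predicate _ S
    have hsym := ContinuousLinearMap.isSelfAdjoint_iff_isSymmetric.mp hsa
    have hCC : C * C = cfc (fun x : ℝ => x ^ (a + a)) S := by
      rw [hC, ← cfc_mul _ _ S (hcont a ha.le) (hcont a ha.le)]
      exact cfc_congr fun x hx => (Real.rpow_add' (hspec x hx) (ne_of_gt (by linarith))).symm
    have h1 : ‖C z‖ ^ 2 = (inner ℂ (C z) (C z) : ℂ).re := by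
      simpa using (inner_self_eq_norm_sq (𝕜 := ℂ) (C z)).symm
    have h2 : (inner ℂ (C z) (C z) : ℂ) = inner ℂ z (C (C z)) := hsym z (C z)
    rw [h1, h2, ← ContinuousLinearMap.mul_apply, hCC]
  set N := ‖cfc (fun x : ℝ => x ^ (p * c)) S y‖ ^ 2 with hNdef
  set X := ‖cfc (fun x : ℝ => x ^ c) S y‖ ^ 2 with hXdef
  have key : ∀ l : ℝ, 0 < l → N ≤ p * l ^ (p - 1) * X + (1 - p) * l ^ p * ‖y‖ ^ 2 := by
    intro l hl
    have hccp : (0:ℝ) ≤ c + c := by linarith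
    have hop : cfc (fun x : ℝ => x ^ (p * c + p * c)) S ≤
        cfc (fun x : ℝ => p * l ^ (p - 1) * x ^ (c + c) + (1 - p) * l ^ p) S := by
      refine cfc_mono (fun x hx => ?_) (hcont _ (by nlinarith))
        ((continuousOn_const.mul (hcont _ hccp)).add continuousOn_const)
      have hx0 := hspec x hx
      have h1 : x ^ (p * c + p * c) = (x ^ (c + c)) ^ p := by
        rw [show p * c + p * c = (c + c) * p by ring, Real.rpow_mul hx0]
      rw [h1]
      exact aux_scalar_young hp hp1 hl (Real.rpow_nonneg hx0 (c + c))
    have hdecomp : cfc (fun x : ℝ => p * l ^ (p - 1) * x ^ (c + c) + (1 - p) * l ^ p) S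
        = (p * l ^ (p - 1)) • cfc (fun x : ℝ => x ^ (c + c)) S
          + algebraMap ℝ (H →L[ℂ] H) ((1 - p) * l ^ p) := by
      rw [cfc_add S (fun x : ℝ => p * l ^ (p - 1) * x ^ (c + c)) (fun _ => (1 - p) * l ^ p) (continuousOn_const.mul (hcont _ hccp)) continuousOn_const,
        cfc_const_mul _ _ S (hcont _ hccp), cfc_const _ S]
    have hle := hop.trans_eq hdecomp
    have hmono := aux_re_inner_mono hle y
    have hexp : (inner ℂ y (((p * l ^ (p - 1)) • cfc (fun x : ℝ => x ^ (c + c)) S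
          + algebraMap ℝ (H →L[ℂ] H) ((1 - p) * l ^ p)) y) : ℂ).re
        = p * l ^ (p - 1) * (inner ℂ y (cfc (fun x : ℝ => x ^ (c + c)) S y) : ℂ).re
          + (1 - p) * l ^ p * ‖y‖ ^ 2 := by
      rw [ContinuousLinearMap.add_apply, inner_add_right, Complex.add_re,
        ContinuousLinearMap.smul_apply, aux_re_inner_real_smul,
        Algebra.algebraMap_eq_smul_one, ContinuousLinearMap.smul_apply,
        ContinuousLinearMap.one_apply, aux_re_inner_real_smul]
      have : (inner ℂ y y : ℂ).re = ‖y‖ ^ 2 := by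
        simpa using inner_self_eq_norm_sq (𝕜 := ℂ) y
      rw [this]
    rw [hexp] at hmono
    calc N = (inner ℂ y (cfc (fun x : ℝ => x ^ (p * c + p * c)) S y) : ℂ).re := by
          rw [hNdef]; exact hCsq (p * c) (mul_pos hp hc) y
      _ ≤ _ := hmono
      _ = p * l ^ (p - 1) * X + (1 - p) * l ^ p * ‖y‖ ^ 2 := by
          rw [hXdef, hCsq c hc y]
  have hfinal : N ≤ X ^ p * (‖y‖ ^ 2) ^ (1 - p) :=
    aux_scalar_opt hp hp1 (by positivity) hM key
  -- take square roots
  have hres : ‖cfc (fun x : ℝ => x ^ (p * c)) S y‖ ^ 2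
      ≤ (‖cfc (fun x : ℝ => x ^ c) S y‖ ^ p * ‖y‖ ^ (1 - p)) ^ 2 := by
    have hrw : (‖cfc (fun x : ℝ => x ^ c) S y‖ ^ p * ‖y‖ ^ (1 - p)) ^ 2
        = X ^ p * (‖y‖ ^ 2) ^ (1 - p) := by
      rw [mul_pow, hXdef, ← Real.rpow_natCast (‖cfc (fun x : ℝ => x ^ c) S y‖ ^ p) 2,
        ← Real.rpow_natCast (‖y‖ ^ (1 - p)) 2,
        ← Real.rpow_natCast ‖cfc (fun x : ℝ => x ^ c) S y‖ 2,
        ← Real.rpow_natCast ‖y‖ 2,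
        ← Real.rpow_mul (norm_nonneg _), ← Real.rpow_mul (norm_nonneg _),
        ← Real.rpow_mul (norm_nonneg _), ← Real.rpow_mul (norm_nonneg _)]
      ring_nf
    rw [hrw]
    exact hfinal
  have h2 : (0:ℝ) ≤ ‖cfc (fun x : ℝ => x ^ c) S y‖ ^ p * ‖y‖ ^ (1 - p) := by positivity
  exact le_of_pow_le_pow_left₀ two_ne_zero h2 hres



/-- Laplace-transform representation of the resolvent: for `Re z = -2 < 0`,
`u = ∫₀^∞ e^{z t} T t ((2 - iλ) u + K u) dt`. -/
private lemma aux_laplace (D : Submodule ℂ H) (K : D →ₗ[ℂ] H)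
    (T : ℝ → H →L[ℂ] H)
    (hT0 : T 0 = 1)
    (hTcontr : ∀ t : ℝ, 0 ≤ t → ‖T t‖ ≤ 1)
    (hTcont : ∀ v : H, ContinuousOn (fun t => T t v) (Set.Ici (0 : ℝ)))
    (hTgen : ∀ u : D, ∀ t : ℝ, 0 ≤ t →
      T t (u : H) - (u : H) = -∫ s in (0:ℝ)..t, T s (K u))
    (u : D) (lam : ℝ) :
    (u : H) = ∫ t in Set.Ioi (0:ℝ),
      Complex.exp (((-2 : ℂ) + Complex.I * lam) * t) •
        T t (((2 : ℂ) - Complex.I * lam) • (u : H) + K u) := by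
  set c : ℂ := (-2 : ℂ) + Complex.I * lam with hc
  have hcre : c.re = -2 := by simp [hc]
  set f : H := ((2 : ℂ) - Complex.I * lam) • (u : H) + K u with hf
  set g : ℝ → H := fun t => Complex.exp (c * t) • T t f with hg
  set F : ℝ → H := fun t => Complex.exp (c * t) • T t (u : H) with hF
  -- continuity facts
  have hexpcont : Continuous fun t : ℝ => Complex.exp (c * t) := by
    fun_prop
  have hgcont : ContinuousOn g (Set.Ici (0:ℝ)) :=
    (hexpcont.continuousOn).smul (hTcont f)
  have hFcont : ContinuousOn F (Set.Ici (0:ℝ)) :=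
    (hexpcont.continuousOn).smul (hTcont (u : H))
  -- derivative of t ↦ T t u on (0, ∞)
  have hderivG : ∀ t : ℝ, 0 < t → HasDerivAt (fun s => T s (u : H)) (-(T t (K u))) t := by
    intro t ht
    have hmem : Set.Ici (0:ℝ) ∈ nhds t :=
      Filter.mem_of_superset (isOpen_Ioi.mem_nhds ht) Set.Ioi_subset_Ici_self
    have hint : IntervalIntegrable (fun s => T s (K u)) volume 0 t := by
      apply ContinuousOn.intervalIntegrable
      apply (hTcont (K u)).mono
      rw [Set.uIcc_of_le ht.le]
      exact fun x hx => hx.1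
    have hmeas : StronglyMeasurableAtFilter (fun s => T s (K u)) (nhds t) :=
      ⟨Set.Ici 0, hmem, (hTcont (K u)).aestronglyMeasurable measurableSet_Ici⟩
    have hca : ContinuousAt (fun s => T s (K u)) t := (hTcont (K u)).continuousAt hmem
    have h1 : HasDerivAt (fun b => ∫ s in (0:ℝ)..b, T s (K u)) (T t (K u)) t :=
      intervalIntegral.integral_hasDerivAt_right hint hmeas hca
    have h2 : HasDerivAt (fun b => (u : H) - ∫ s in (0:ℝ)..b, T s (K u)) (-(T t (K u))) t :=
      h1.const_sub _
    apply h2.congr_of_eventuallyEq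
    filter_upwards [hmem] with s hs
    have h3 := hTgen u s hs
    rw [sub_eq_iff_eq_add] at h3
    show T s (u : H) = (u : H) - ∫ τ in (0:ℝ)..s, T τ (K u)
    rw [h3]; abel
  -- derivative of F on (0, ∞)
  have hderivF : ∀ t : ℝ, 0 < t → HasDerivAt F (-(g t)) t := by
    intro t ht
    have hφ : HasDerivAt (fun s : ℝ => Complex.exp (c * s)) (c * Complex.exp (c * t)) t := by
      have h1 : HasDerivAt (fun z : ℂ => Complex.exp (c * z))
          (Complex.exp (c * t) * c) (t : ℂ) := by
        simpa using (((hasDerivAt_id ((t : ℝ) : ℂ)).const_mul c).cexp)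
      have := h1.comp_ofReal
      simpa [mul_comm] using this
    have hψ := hderivG t ht
    have hs := hφ.smul hψ
    have hTf : T t f = ((2 : ℂ) - Complex.I * lam) • T t (u : H) + T t (K u) := by
      rw [hf]; simp
    have heq2 : -(g t) = Complex.exp (c * t) • -(T t (K u))
        + (c * Complex.exp (c * t)) • T t (u : H) := by
      simp only [hg, hTf, hc, smul_add, smul_smul, smul_neg, neg_add, neg_smul]
      module
    rw [heq2]
    exact hs
  -- FTC on [0, b]
  have key : ∀ b : ℝ, 0 < b → (∫ t in (0:ℝ)..b, g t) = (u : H) - F b := by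
    intro b hb
    have hIcc : Set.Icc (0:ℝ) b ⊆ Set.Ici 0 := fun x hx => hx.1
    have hcont' : ContinuousOn F (Set.Icc 0 b) := hFcont.mono hIcc
    have hderiv' : ∀ x ∈ Set.Ioo 0 b, HasDerivWithinAt F (-(g x)) (Set.Ioi x) x :=
      fun x hx => (hderivF x hx.1).hasDerivWithinAt
    have hint' : IntervalIntegrable (fun t => -(g t)) volume 0 b := by
      apply ContinuousOn.intervalIntegrable
      apply ContinuousOn.neg
      apply hgcont.mono
      rw [Set.uIcc_of_le hb.le]
      exact hIcc
    have := intervalIntegral.integral_eq_sub_of_hasDeriv_right_of_le hb.le hcont' hderiv' hint'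
    rw [intervalIntegral.integral_neg, neg_eq_iff_eq_neg] at this
    have hF0 : F 0 = (u : H) := by
      rw [hF]
      simp [hT0]
    rw [this, neg_sub, hF0]
  -- integrability of g on (0, ∞)
  have hgint : IntegrableOn g (Set.Ioi (0:ℝ)) := by
    have hbound : ∀ t ∈ Set.Ioi (0:ℝ), ‖g t‖ ≤ ‖f‖ * Real.exp (-2 * t) := by
      intro t ht
      rw [hg]
      simp only [norm_smul]
      have h1 : ‖Complex.exp (c * t)‖ = Real.exp (-2 * t) := by
        rw [Complex.norm_exp]
        congr 1
        rw [hc]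
        simp [Complex.add_re, Complex.mul_re] <;> ring
      rw [h1]
      have h2 : ‖T t f‖ ≤ ‖f‖ :=
        le_trans ((T t).le_opNorm f) (by
          nlinarith [hTcontr t (le_of_lt ht), norm_nonneg f, norm_nonneg (T t)])
      nlinarith [Real.exp_pos (-2 * t), norm_nonneg (T t f)]
    refine Integrable.mono' (g := fun t => ‖f‖ * Real.exp (-2 * t)) ?_ ?_ ?_
    · exact (exp_neg_integrableOn_Ioi 0 (by norm_num : (0:ℝ) < 2)).const_mul ‖f‖
    · exact (hgcont.mono fun x hx => le_of_lt hx).aestronglyMeasurable measurableSet_Ioi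
    · filter_upwards [ae_restrict_mem measurableSet_Ioi] with t ht
      exact hbound t ht
  -- limits
  have htend1 : Filter.Tendsto (fun b => ∫ t in (0:ℝ)..b, g t) Filter.atTop
      (nhds (∫ t in Set.Ioi (0:ℝ), g t)) :=
    intervalIntegral_tendsto_integral_Ioi 0 hgint Filter.tendsto_id
  have hFtend : Filter.Tendsto F Filter.atTop (nhds 0) := by
    have hbd : ∀ᶠ b in Filter.atTop, ‖F b‖ ≤ Real.exp (-2 * b) * ‖(u : H)‖ := by
      filter_upwards [Filter.eventually_ge_atTop (0:ℝ)] with b hb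
      rw [hF]
      simp only [norm_smul]
      have h1 : ‖Complex.exp (c * b)‖ = Real.exp (-2 * b) := by
        rw [Complex.norm_exp]
        congr 1
        rw [hc]
        simp [Complex.add_re, Complex.mul_re] <;> ring
      rw [h1]
      have h2 : ‖T b (u:H)‖ ≤ ‖(u:H)‖ :=
        le_trans ((T b).le_opNorm _) (by
          nlinarith [hTcontr b hb, norm_nonneg (u:H), norm_nonneg (T b)])
      nlinarith [Real.exp_pos (-2 * b), norm_nonneg (T b (u:H))]
    have h3 : Filter.Tendsto (fun b : ℝ => Real.exp (-2 * b)) Filter.atTop (nhds 0) := by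
      apply Real.tendsto_exp_atBot.comp
      exact (Filter.tendsto_const_mul_atBot_of_neg (by norm_num)).mpr Filter.tendsto_id
    exact squeeze_zero_norm' hbd (by simpa using h3.mul_const ‖(u : H)‖)
  have htend2 : Filter.Tendsto (fun b => (u : H) - F b) Filter.atTop (nhds ((u : H) - 0)) :=
    Filter.Tendsto.const_sub _ hFtend
  have heq : (fun b => ∫ t in (0:ℝ)..b, g t) =ᶠ[Filter.atTop] fun b => (u : H) - F b := by
    filter_upwards [Filter.eventually_gt_atTop (0:ℝ)] with b hb
    exact key b hb
  have := tendsto_nhds_unique (htend1.congr' heq) htend2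
  rw [this, sub_zero]

end AuxCuspidal

set_option maxHeartbeats 2000000 in
/-- From uniform smoothing bounds `sup_{t>0} t^{2/r-1} ‖Λ^r e^{-t(1+K)}‖ ≤ C₀` for the
contraction semigroup `(e^{-tK})_{t≥0}` generated by the maximal accretive operator `K`,
one deduces the subelliptic estimates `‖Λ^{θr} u‖ ≤ C_θ (‖(K-iλ)u‖ + ‖u‖)` on `D(K)`,
for every `θ ∈ (0, r/(2-r))`.
The positive self-adjoint operator `Λ ≥ 1` (with `D(Λ)` dense in `D(K)` and
`‖Ku‖ ≤ ‖Λu‖` on `D(Λ)`) is encoded through its bounded inverse `S = Λ⁻¹`, a positive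
injective self-adjoint contraction; `u ∈ D(Λ^s)` with `Λ^s u = w` means
`cfc (·^s) S w = u`.  The semigroup `(T t)_{t≥0}` is a strongly continuous contraction
semigroup whose generator is `-K` (integrated form `T t u - u = -∫₀ᵗ T s (K u) ds`). -/
theorem smoothing_semigroup_implies_cuspidal
    {H : Type*} [NormedAddCommGroup H] [InnerProductSpace ℂ H] [CompleteSpace H]
    (D : Submodule ℂ H) (hDdense : Dense (D : Set H)) (K : D →ₗ[ℂ] H)
    (haccr : ∀ u : D, 0 ≤ (inner ℂ (u : H) (K u) : ℂ).re)
    (hmax : Function.Bijective fun u : D => (u : H) + K u)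
    -- the contraction semigroup generated by `-K`
    (T : ℝ → H →L[ℂ] H)
    (hT0 : T 0 = 1)
    (hTsg : ∀ s t : ℝ, 0 ≤ s → 0 ≤ t → T (s + t) = T s ∘L T t)
    (hTcontr : ∀ t : ℝ, 0 ≤ t → ‖T t‖ ≤ 1)
    (hTcont : ∀ v : H, ContinuousOn (fun t => T t v) (Set.Ici (0 : ℝ)))
    (hTgen : ∀ u : D, ∀ t : ℝ, 0 ≤ t →
      T t (u : H) - (u : H) = -∫ s in (0:ℝ)..t, T s (K u))
    -- `Λ` via its bounded inverse `S`
    (S : H →L[ℂ] H) (hS_pos : S.IsPositive) (hS_norm : ‖S‖ ≤ 1)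
    (hS_inj : Function.Injective S) (hSD : ∀ v : H, S v ∈ D)
    (hΛdense : ∀ u : D, ∀ ε : ℝ, 0 < ε → ∃ v : H,
      ‖(u : H) - S v‖ + ‖K u - K ⟨S v, hSD v⟩‖ < ε)
    (hKΛ : ∀ v : H, ‖K ⟨S v, hSD v⟩‖ ≤ ‖v‖)
    (r : ℝ) (hr : 0 < r) (hr1 : r ≤ 1)
    -- `C₀ = sup_{t>0} t^{2/r - 1} ‖Λ^r e^{-t(1+K)}‖ < ∞`
    (C₀ : ℝ)
    (hC₀ : ∀ t : ℝ, 0 < t → ∀ v : H, ∃ w : H,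
      (cfc (fun x : ℝ => x ^ r) S) w = Real.exp (-t) • T t v ∧
      t ^ (2/r - 1) * ‖w‖ ≤ C₀ * ‖v‖) :
    ∀ θ : ℝ, 0 < θ → θ < r / (2 - r) →
      ∃ C_θ > 0, ∀ u : D, ∀ lam : ℝ, ∃ w : H,
        (cfc (fun x : ℝ => x ^ (θ * r)) S) w = (u : H) ∧
        ‖w‖ ≤ C_θ * (‖K u - (Complex.I * (lam : ℂ)) • (u : H)‖ + ‖(u : H)‖) := by
  intro θ hθ0 hθr
  -- parameter arithmetic
  have hr2 : (0:ℝ) < 2 - r := by linarith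
  have hθ1 : θ < 1 := lt_of_lt_of_le hθr (by rw [div_le_one hr2]; linarith)
  have h2r : (2:ℝ) ≤ 2 / r := by rw [le_div_iff₀ hr]; nlinarith
  set α := θ * (2 / r - 1) with hαdef
  have hα0 : 0 < α := mul_pos hθ0 (by linarith)
  have hα1 : α < 1 := by
    have h2 : θ * (2 - r) < r := (lt_div_iff₀ hr2).mp hθr
    have h1 : α = θ * (2 - r) / r := by rw [hαdef]; field_simp
    rw [h1]
    exact (div_lt_one hr).mpr h2
  set C₁ := max C₀ 1 with hC₁def
  have hC₁1 : (1:ℝ) ≤ C₁ := le_max_right _ _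
  have hC₁0 : (0:ℝ) < C₁ := by linarith
  have hC₁θ : (0:ℝ) < C₁ ^ θ := Real.rpow_pos_of_pos hC₁0 θ
  -- the Γ-type integral
  have hI₀int : IntegrableOn (fun t => Real.exp (-t) * t ^ (-α)) (Set.Ioi (0:ℝ)) := by
    have := Real.GammaIntegral_convergent (s := 1 - α) (by linarith)
    simpa [show (1:ℝ) - α - 1 = -α by ring] using this
  set I₀ := ∫ t in Set.Ioi (0:ℝ), Real.exp (-t) * t ^ (-α) with hI₀def
  have hI₀nonneg : 0 ≤ I₀ := setIntegral_nonneg measurableSet_Ioi fun t ht =>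
    mul_nonneg (Real.exp_nonneg _) (Real.rpow_nonneg (le_of_lt ht) _)
  have hK2 : 0 ≤ C₁ ^ θ * I₀ := mul_nonneg hC₁θ.le hI₀nonneg
  refine ⟨2 * (C₁ ^ θ * I₀) + 1, by nlinarith, fun u lam => ?_⟩
  -- operators
  set B := cfc (fun x : ℝ => x ^ r) S with hBdef
  set A := cfc (fun x : ℝ => x ^ (θ * r)) S with hAdef
  set P₂ := cfc (fun x : ℝ => x ^ ((1 - θ) * r)) S with hP₂def
  have h0S : (0 : H →L[ℂ] H) ≤ S := (ContinuousLinearMap.nonneg_iff_isPositive S).mpr hS_pos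
  have hspec : ∀ x ∈ spectrum ℝ S, 0 ≤ x := fun x hx => spectrum_nonneg_of_nonneg h0S hx
  have hcont : ∀ a : ℝ, 0 ≤ a → ContinuousOn (fun x : ℝ => x ^ a) (spectrum ℝ S) :=
    fun a ha x _ => (Real.continuousAt_rpow_const x a (Or.inr ha)).continuousWithinAt
  have h1θ : (0:ℝ) < 1 - θ := by linarith
  have hθr0 : (0:ℝ) < θ * r := mul_pos hθ0 hr
  have h1θr0 : (0:ℝ) < (1 - θ) * r := mul_pos h1θ hr
  have hAP₂ : A * P₂ = B := by
    rw [hAdef, hP₂def, hBdef, ← cfc_mul _ _ S (hcont _ hθr0.le) (hcont _ h1θr0.le)]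
    refine cfc_congr fun x hx => ?_
    rw [← Real.rpow_add' (hspec x hx) (by rw [show θ*r + (1-θ)*r = r by ring]; exact hr.ne'),
      show θ*r + (1-θ)*r = r by ring]
  -- data
  set f : H := ((2 : ℂ) - Complex.I * lam) • (u : H) + K u with hfdef
  have hrepr := aux_laplace D K T hT0 hTcontr hTcont hTgen u lam
  set v : ℝ → H := fun t => Real.exp (-t) • T t f with hvdef
  -- choice of preimages under B
  set wsel : ℝ → H := fun t => if ht : 0 < t then (hC₀ t ht f).choose else 0 with hwseldef
  have hwsel1 : ∀ t : ℝ, 0 < t → B (wsel t) = v t := by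
    intro t ht
    rw [hBdef, hvdef, hwseldef]
    simp only [dif_pos ht]
    exact (hC₀ t ht f).choose_spec.1
  have hwsel2 : ∀ t : ℝ, 0 < t → t ^ (2/r - 1) * ‖wsel t‖ ≤ C₀ * ‖f‖ := by
    intro t ht
    rw [hwseldef]
    simp only [dif_pos ht]
    exact (hC₀ t ht f).choose_spec.2
  have hwnorm : ∀ t : ℝ, 0 < t → ‖wsel t‖ ≤ C₁ * t ^ (1 - 2/r) * ‖f‖ := by
    intro t ht
    have h1 := hwsel2 t ht
    have hp : 0 < t ^ (2/r - 1) := Real.rpow_pos_of_pos ht _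
    have h2 : t ^ (2/r-1) * ‖wsel t‖ ≤ C₁ * ‖f‖ := by
      have hCC : C₀ ≤ C₁ := le_max_left _ _
      nlinarith [norm_nonneg f]
    have h3 : ‖wsel t‖ ≤ (C₁ * ‖f‖) / t ^ (2/r-1) := by
      rw [le_div_iff₀ hp]
      nlinarith
    calc ‖wsel t‖ ≤ (C₁ * ‖f‖) / t ^ (2/r-1) := h3
      _ = C₁ * t ^ (1 - 2/r) * ‖f‖ := by
          rw [div_eq_mul_inv, ← Real.rpow_neg ht.le, show -(2/r - 1) = 1 - 2/r by ring]
          ring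
  set W : ℝ → H := fun t => P₂ (wsel t) with hWdef
  have hAW : ∀ t : ℝ, 0 < t → A (W t) = v t := by
    intro t ht
    rw [hWdef]
    rw [← ContinuousLinearMap.mul_apply, hAP₂]
    exact hwsel1 t ht
  have hinterp : ∀ z : H, ‖P₂ z‖ ≤ ‖B z‖ ^ (1-θ) * ‖z‖ ^ (1 - (1-θ)) := by
    intro z
    rw [hP₂def, hBdef]
    exact aux_interp S hS_pos hr h1θ (by linarith) z
  have hWnorm : ∀ t : ℝ, 0 < t → ‖W t‖ ≤ C₁ ^ θ * ‖f‖ * t ^ (-α) := by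
    intro t ht
    have hv : ‖B (wsel t)‖ = ‖v t‖ := by rw [hwsel1 t ht]
    have hvle : ‖v t‖ ≤ ‖f‖ := by
      rw [hvdef]
      simp only [norm_smul, Real.norm_eq_abs, abs_of_pos (Real.exp_pos (-t))]
      have hTle : ‖T t f‖ ≤ ‖f‖ := le_trans ((T t).le_opNorm f)
        (by nlinarith [hTcontr t ht.le, norm_nonneg f, norm_nonneg (T t)])
      have he1 : Real.exp (-t) ≤ 1 := by
        calc Real.exp (-t) ≤ Real.exp 0 := Real.exp_le_exp.mpr (by linarith)
          _ = 1 := Real.exp_zero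
      nlinarith [Real.exp_pos (-t), norm_nonneg (T t f), norm_nonneg f]
    have e1 : (C₁ * t ^ (1-2/r) * ‖f‖) ^ θ = C₁ ^ θ * (t ^ (1-2/r)) ^ θ * ‖f‖ ^ θ := by
      rw [Real.mul_rpow (mul_nonneg hC₁0.le (Real.rpow_nonneg ht.le _)) (norm_nonneg f),
        Real.mul_rpow hC₁0.le (Real.rpow_nonneg ht.le _)]
    have e2 : (t ^ (1-2/r)) ^ θ = t ^ (-α) := by
      rw [← Real.rpow_mul ht.le, hαdef]
      congr 1
      ring
    have e3 : ‖f‖ ^ (1-θ) * ‖f‖ ^ θ = ‖f‖ := by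
      rw [← Real.rpow_add' (norm_nonneg f) (by norm_num), show (1-θ)+θ = (1:ℝ) by ring,
        Real.rpow_one]
    calc ‖W t‖ = ‖P₂ (wsel t)‖ := by rw [hWdef]
      _ ≤ ‖B (wsel t)‖ ^ (1-θ) * ‖wsel t‖ ^ (1-(1-θ)) := hinterp _
      _ = ‖v t‖ ^ (1-θ) * ‖wsel t‖ ^ θ := by rw [hv, show (1:ℝ)-(1-θ) = θ by ring]
      _ ≤ ‖f‖ ^ (1-θ) * (C₁ * t ^ (1-2/r) * ‖f‖) ^ θ := by
          apply mul_le_mul (Real.rpow_le_rpow (norm_nonneg _) hvle (by linarith))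
            (Real.rpow_le_rpow (norm_nonneg _) (hwnorm t ht) hθ0.le)
            (Real.rpow_nonneg (norm_nonneg _) _) (Real.rpow_nonneg (norm_nonneg _) _)
      _ = C₁ ^ θ * ‖f‖ * t ^ (-α) := by
          rw [e1, e2, show ‖f‖ ^ (1-θ) * (C₁ ^ θ * t ^ (-α) * ‖f‖ ^ θ)
            = C₁ ^ θ * (‖f‖ ^ (1-θ) * ‖f‖ ^ θ) * t ^ (-α) by ring, e3]
  -- continuity of W on (0, ∞)
  have hvcont : ContinuousOn v (Set.Ici (0:ℝ)) := by
    rw [hvdef]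
    exact (Real.continuous_exp.comp continuous_neg).continuousOn.smul (hTcont f)
  have hWcont : ContinuousOn W (Set.Ioi (0:ℝ)) := by
    intro t₀ ht₀
    have ht₀' : (0:ℝ) < t₀ := ht₀
    set M₀ : ℝ := C₁ * (t₀/2) ^ (1-2/r) * ‖f‖ + C₁ * t₀ ^ (1-2/r) * ‖f‖ with hM₀
    have hwd : ∀ s : ℝ, t₀/2 < s → ‖wsel s - wsel t₀‖ ≤ M₀ := by
      intro s hs
      have hs0 : 0 < s := lt_trans (by linarith) hs
      have h1 : ‖wsel s‖ ≤ C₁ * (t₀/2) ^ (1-2/r) * ‖f‖ := by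
        refine le_trans (hwnorm s hs0) ?_
        have hmono : s ^ (1-2/r) ≤ (t₀/2) ^ (1-2/r) :=
          Real.rpow_le_rpow_of_nonpos (by linarith) hs.le (by linarith)
        calc C₁ * s ^ (1-2/r) * ‖f‖ = (C₁ * ‖f‖) * s ^ (1-2/r) := by ring
          _ ≤ (C₁ * ‖f‖) * (t₀/2) ^ (1-2/r) :=
              mul_le_mul_of_nonneg_left hmono (mul_nonneg hC₁0.le (norm_nonneg f))
          _ = C₁ * (t₀/2) ^ (1-2/r) * ‖f‖ := by ring
      have h2 : ‖wsel t₀‖ ≤ C₁ * t₀ ^ (1-2/r) * ‖f‖ := hwnorm t₀ ht₀'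
      calc ‖wsel s - wsel t₀‖ ≤ ‖wsel s‖ + ‖wsel t₀‖ := norm_sub_le _ _
        _ ≤ M₀ := by rw [hM₀]; linarith
    have hWd : ∀ s : ℝ, 0 < s → t₀/2 < s →
        ‖W s - W t₀‖ ≤ ‖v s - v t₀‖ ^ (1-θ) * M₀ ^ θ := by
      intro s hs0 hs
      have h1 : W s - W t₀ = P₂ (wsel s - wsel t₀) := by
        rw [hWdef]; simp [map_sub]
      have h2 : B (wsel s - wsel t₀) = v s - v t₀ := by
        rw [map_sub, hwsel1 s hs0, hwsel1 t₀ ht₀']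
      calc ‖W s - W t₀‖ = ‖P₂ (wsel s - wsel t₀)‖ := by rw [h1]
        _ ≤ ‖B (wsel s - wsel t₀)‖ ^ (1-θ) * ‖wsel s - wsel t₀‖ ^ (1-(1-θ)) := hinterp _
        _ ≤ ‖v s - v t₀‖ ^ (1-θ) * M₀ ^ θ := by
            rw [h2, show (1:ℝ)-(1-θ) = θ by ring]
            exact mul_le_mul_of_nonneg_left
              (Real.rpow_le_rpow (norm_nonneg _) (hwd s hs) hθ0.le)
              (Real.rpow_nonneg (norm_nonneg _) _)
    have hv1 : Filter.Tendsto v (nhdsWithin t₀ (Set.Ioi 0)) (nhds (v t₀)) :=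
      (hvcont t₀ (le_of_lt ht₀')).mono Set.Ioi_subset_Ici_self
    have hv2 : Filter.Tendsto (fun s => ‖v s - v t₀‖) (nhdsWithin t₀ (Set.Ioi 0)) (nhds 0) := by
      simpa using (hv1.sub (tendsto_const_nhds (x := v t₀))).norm
    have hv3 := (Real.continuousAt_rpow_const 0 (1-θ) (Or.inr (by linarith))).tendsto.comp hv2
    rw [Real.zero_rpow (by linarith : (1:ℝ)-θ ≠ 0)] at hv3
    have hvt : Filter.Tendsto (fun s => ‖v s - v t₀‖ ^ (1-θ) * M₀ ^ θ)
        (nhdsWithin t₀ (Set.Ioi 0)) (nhds 0) := by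
      simpa using hv3.mul_const (M₀ ^ θ)
    have hev : ∀ᶠ s in nhdsWithin t₀ (Set.Ioi 0),
        ‖W s - W t₀‖ ≤ ‖v s - v t₀‖ ^ (1-θ) * M₀ ^ θ := by
      filter_upwards [self_mem_nhdsWithin,
        mem_nhdsWithin_of_mem_nhds (isOpen_Ioi.mem_nhds (show t₀/2 < t₀ by linarith))]
        with s hs1 hs2
      exact hWd s hs1 hs2
    have : Filter.Tendsto W (nhdsWithin t₀ (Set.Ioi 0)) (nhds (W t₀)) := by
      rw [tendsto_iff_norm_sub_tendsto_zero]
      exact squeeze_zero' (Filter.Eventually.of_forall fun s => norm_nonneg _) hev hvt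
    exact this
  -- the candidate w as a strong integral
  set c' : ℂ := (-1 : ℂ) + Complex.I * lam with hc'
  set G : ℝ → H := fun t => Complex.exp (c' * t) • W t with hGdef
  have hGmeas : AEStronglyMeasurable G (volume.restrict (Set.Ioi (0:ℝ))) := by
    apply ContinuousOn.aestronglyMeasurable ?_ measurableSet_Ioi
    rw [hGdef]
    exact (Continuous.continuousOn (by fun_prop)).smul hWcont
  have hGbound : ∀ t ∈ Set.Ioi (0:ℝ), ‖G t‖ ≤ C₁ ^ θ * ‖f‖ * (Real.exp (-t) * t ^ (-α)) := by
    intro t ht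
    have ht0 : (0:ℝ) < t := ht
    have h1 : ‖Complex.exp (c' * t)‖ = Real.exp (-t) := by
      rw [Complex.norm_exp, hc']
      congr 1
      simp [Complex.add_re, Complex.mul_re] <;> ring
    calc ‖G t‖ = Real.exp (-t) * ‖W t‖ := by rw [hGdef]; simp [norm_smul, h1]
      _ ≤ Real.exp (-t) * (C₁ ^ θ * ‖f‖ * t ^ (-α)) :=
          mul_le_mul_of_nonneg_left (hWnorm t ht0) (Real.exp_nonneg _)
      _ = C₁ ^ θ * ‖f‖ * (Real.exp (-t) * t ^ (-α)) := by ring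
  have hGint : IntegrableOn G (Set.Ioi (0:ℝ)) := by
    refine Integrable.mono' (hI₀int.const_mul (C₁ ^ θ * ‖f‖)) hGmeas ?_
    filter_upwards [ae_restrict_mem measurableSet_Ioi] with t ht
    exact hGbound t ht
  refine ⟨∫ t in Set.Ioi (0:ℝ), G t, ?_, ?_⟩
  · -- `A w = u`
    have h1 : A (∫ t in Set.Ioi (0:ℝ), G t) = ∫ t in Set.Ioi (0:ℝ), A (G t) :=
      (ContinuousLinearMap.integral_comp_comm A hGint).symm
    have h2 : Set.EqOn (fun t => A (G t))
        (fun t => Complex.exp (((-2:ℂ) + Complex.I * lam) * t) • T t f) (Set.Ioi (0:ℝ)) := by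
      intro t ht
      have ht0 : (0:ℝ) < t := ht
      show A (G t) = _
      rw [hGdef]
      simp only []
      rw [ContinuousLinearMap.map_smul, hAW t ht0, hvdef]
      simp only []
      rw [← algebraMap_smul ℂ (Real.exp (-t)) (T t f), smul_smul]
      congr 1
      rw [show (algebraMap ℝ ℂ) (Real.exp (-t)) = ((Real.exp (-t) : ℝ) : ℂ) from rfl,
        Complex.ofReal_exp, ← Complex.exp_add, hc']
      congr 1
      push_cast
      ring
    show A _ = _
    rw [h1, setIntegral_congr_fun measurableSet_Ioi h2]
    exact hrepr.symm
  · -- the norm bound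
    have h3 : ‖∫ t in Set.Ioi (0:ℝ), G t‖ ≤ C₁ ^ θ * ‖f‖ * I₀ := by
      have hb := norm_integral_le_of_norm_le (hI₀int.const_mul (C₁ ^ θ * ‖f‖))
        (by filter_upwards [ae_restrict_mem measurableSet_Ioi] with t ht
            exact hGbound t ht)
      rw [MeasureTheory.integral_const_mul] at hb
      rw [hI₀def]
      exact hb
    have hfle : ‖f‖ ≤ ‖K u - (Complex.I * lam) • (u:H)‖ + 2 * ‖(u:H)‖ := by
      rw [hfdef]
      have h4 : ((2:ℂ) - Complex.I * lam) • (u:H) + K u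
          = (K u - (Complex.I * lam) • (u:H)) + (2:ℂ) • (u:H) := by
        module
      rw [h4]
      refine le_trans (norm_add_le _ _) ?_
      have h5 : ‖(2:ℂ) • (u:H)‖ = 2 * ‖(u:H)‖ := by
        rw [norm_smul]
        norm_num
      rw [h5]
    calc ‖∫ t in Set.Ioi (0:ℝ), G t‖ ≤ C₁ ^ θ * ‖f‖ * I₀ := h3
      _ = (C₁ ^ θ * I₀) * ‖f‖ := by ring
      _ ≤ (C₁ ^ θ * I₀) * (‖K u - (Complex.I * lam) • (u:H)‖ + 2 * ‖(u:H)‖) :=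
          mul_le_mul_of_nonneg_left hfle hK2
      _ ≤ (2 * (C₁ ^ θ * I₀) + 1) * (‖K u - (Complex.I * lam) • (u:H)‖ + ‖(u:H)‖) := by
          nlinarith [norm_nonneg (K u - (Complex.I * (lam:ℂ)) • (u:H)), norm_nonneg (u:H), hK2]
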